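/- Let Q be a finite-dimensional real vector space, P = Q × Q × Q*, and consider the linear maps φ₁ : P → Q × Q*, φ₁(a,b,c) = (a,c), and φ₂ : P → (Q × Q) × (Q × Q)*, φ₂(a,b,c) = ((a,b), ι(c)), where ι : Q* → (Q × Q)* is given by ι(c)(x,y) = c(x). Let D₁ ⊆ (Q × Q*) × (Q × Q*)* be the graph Dirac structure of the canonical symplectic form ω on Q × Q*, and let D₂ ⊆ ((Q×Q) × (Q×Q)*) × ((Q×Q) × (Q×Q)*)* be the graph Dirac structure of the canonical symplectic form on (Q×Q) × (Q×Q)*. Then the two backward images coincide: B_{φ₁}(D₁) = B_{φ₂}(D₂). -/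

import Mathlib

/-- The canonical symplectic form `ω((x₁,α₁),(x₂,α₂)) = α₁(x₂) − α₂(x₁)` on `X ⊕ X*`. -/
noncomputable def canonicalSymplecticForm (X : Type*) [AddCommGroup X] [Module ℝ X] :
    LinearMap.BilinForm ℝ (X × Module.Dual ℝ X) :=
  LinearMap.mk₂ ℝ (fun x y => x.2 y.1 - y.2 x.1)
    (by intro m₁ m₂ n; simp; ring)
    (by intro c m n; simp; ring)
    (by intro m n₁ n₂; simp; ring)
    (by intro c m n; simp; ring)

/-- The graph Dirac structure `{(w, ω_X(w,·)) | w ∈ X ⊕ X*}` of the canonical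
symplectic form on `X ⊕ X*`. -/
noncomputable def canonicalGraphDirac (X : Type*) [AddCommGroup X] [Module ℝ X] :
    Submodule ℝ ((X × Module.Dual ℝ X) × Module.Dual ℝ (X × Module.Dual ℝ X)) :=
  LinearMap.range (LinearMap.prod LinearMap.id (canonicalSymplecticForm X))

/-- The backward image `B_φ(D_V) = {(u, β ∘ φ) | u ∈ U, β ∈ V*, (φ(u), β) ∈ D_V}`
of a subspace `D_V ⊆ V ⊕ V*` under a linear map `φ : U → V`. -/
noncomputable def backwardImage {U V : Type*} [AddCommGroup U] [Module ℝ U]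
    [AddCommGroup V] [Module ℝ V] (φ : U →ₗ[ℝ] V)
    (D : Submodule ℝ (V × Module.Dual ℝ V)) : Submodule ℝ (U × Module.Dual ℝ U) where
  carrier := {p | ∃ β : Module.Dual ℝ V, p.2 = β.comp φ ∧ (φ p.1, β) ∈ D}
  add_mem' := by
    rintro ⟨u₁, α₁⟩ ⟨u₂, α₂⟩ ⟨β₁, h₁, hD₁⟩ ⟨β₂, h₂, hD₂⟩
    exact ⟨β₁ + β₂, by simp at h₁ h₂; simp [h₁, h₂, LinearMap.add_comp],
      by simpa using D.add_mem hD₁ hD₂⟩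
  zero_mem' := ⟨0, by simp, by simp only [Prod.fst_zero, map_zero]; exact D.zero_mem⟩
  smul_mem' := by
    rintro c ⟨u, α⟩ ⟨β, h, hD⟩
    exact ⟨c • β, by simp at h; simp [h, LinearMap.smul_comp],
      by simpa using D.smul_mem c hD⟩

lemma mem_canonicalGraphDirac {X : Type*} [AddCommGroup X] [Module ℝ X]
    (v : X × Module.Dual ℝ X) (β : Module.Dual ℝ (X × Module.Dual ℝ X)) :
    (v, β) ∈ canonicalGraphDirac X ↔ β = canonicalSymplecticForm X v := by
  constructor
  · rintro ⟨w, hw⟩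
    simp only [LinearMap.prod_apply, LinearMap.id_apply, Function.prod, Prod.mk.injEq] at hw
    rw [← hw.1]; exact hw.2.symm
  · rintro rfl
    exact ⟨v, rfl⟩

/-- (Fiberwise linear content of `D_M = B_{pr_{T*Q}}(D_{ω_Q}) =
B_{i_M}(D_{ω_{TQ}})` on the Pontryagin bundle `M = TQ ⊕ T*Q`.)  Let `Q` be a
finite-dimensional real vector space, `P = Q × Q × Q*`, `φ₁ : P → Q × Q*`,
`φ₁(a,b,c) = (a,c)`, and `φ₂ : P → (Q × Q) × (Q × Q)*`, `φ₂(a,b,c) = ((a,b), ι c)`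
with `ι(c)(x,y) = c(x)`.  Then the backward images of the graph Dirac structures of the
canonical symplectic forms on `Q × Q*` and on `(Q × Q) × (Q × Q)*` coincide:
`B_{φ₁}(D₁) = B_{φ₂}(D₂)`. -/
theorem pontryagin_backward_images_coincide
    (Q : Type*) [AddCommGroup Q] [Module ℝ Q] [FiniteDimensional ℝ Q] :
    backwardImage
      (LinearMap.prod (LinearMap.fst ℝ Q (Q × Module.Dual ℝ Q))
        ((LinearMap.snd ℝ Q (Module.Dual ℝ Q)).comp
          (LinearMap.snd ℝ Q (Q × Module.Dual ℝ Q))))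
      (canonicalGraphDirac Q) =
    backwardImage
      (LinearMap.prod
        (LinearMap.prod (LinearMap.fst ℝ Q (Q × Module.Dual ℝ Q))
          ((LinearMap.fst ℝ Q (Module.Dual ℝ Q)).comp
            (LinearMap.snd ℝ Q (Q × Module.Dual ℝ Q))))
        ((LinearMap.fst ℝ Q Q).dualMap.comp
          ((LinearMap.snd ℝ Q (Module.Dual ℝ Q)).comp
            (LinearMap.snd ℝ Q (Q × Module.Dual ℝ Q)))))
      (canonicalGraphDirac (Q × Q)) := by
  ext ⟨⟨a, b, c⟩, α⟩
  constructor
  · rintro ⟨β, hβ, hD⟩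
    rw [mem_canonicalGraphDirac] at hD
    subst hD
    refine ⟨_, ?_, (mem_canonicalGraphDirac _ _).2 rfl⟩
    rw [show α = _ from hβ]
    ext x <;> simp [canonicalSymplecticForm, LinearMap.dualMap_apply]
  · rintro ⟨β, hβ, hD⟩
    rw [mem_canonicalGraphDirac] at hD
    subst hD
    refine ⟨_, ?_, (mem_canonicalGraphDirac _ _).2 rfl⟩
    rw [show α = _ from hβ]
    ext x <;> simp [canonicalSymplecticForm, LinearMap.dualMap_apply]
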